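/- (Sizes of the hard Loomis–Whitney instance; proof of Lemma 6.1) Let n ≥ 3 and M ≥ 1 be integers and let D = {0, 1, …, M}. For each i ∈ {1,…,n}, let R_i ⊆ D^{[n]∖{i}} be the set of all tuples having at most one nonzero coordinate. Then |R_i| = (n−1)·M + 1 for every i, and the natural join { t ∈ D^{[n]} : t|_{[n]∖{i}} ∈ R_i for all i ∈ [n] } equals the set of all tuples in D^{[n]} having at most one nonzero coordinate, which has exactly n·M + 1 elements. -/

import Mathlib

/-- The full simple relation on attribute set `A` over the domain
`D = {0, …, M} ⊆ ℕ`: all tuples `A → ℕ` with values `≤ M` having at most one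
nonzero coordinate. -/
def simpleRel (A : Type*) [Fintype A] [DecidableEq A] (M : ℕ) : Set (A → ℕ) :=
  {t | (∀ a, t a ≤ M) ∧ (Finset.univ.filter (fun a => t a ≠ 0)).card ≤ 1}

lemma simpleRel_eq_finset (A : Type*) [Fintype A] [DecidableEq A] (M : ℕ) :
    simpleRel A M = ↑(insert (0 : A → ℕ)
      ((Finset.univ : Finset (A × Fin M)).image
        fun p => (fun b => if b = p.1 then p.2.1 + 1 else 0 : A → ℕ))) := by
  classical
  ext t
  simp only [Finset.coe_insert, Finset.coe_image, Finset.coe_univ, Set.image_univ,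
    Set.mem_insert_iff, Set.mem_range]
  constructor
  · rintro ⟨hle, hcard⟩
    by_cases h0 : t = 0
    · exact Or.inl h0
    · right
      obtain ⟨a, ha⟩ : ∃ a, t a ≠ 0 := by
        by_contra h; push_neg at h
        exact h0 (funext fun a => h a)
      have haF : a ∈ Finset.univ.filter (fun a => t a ≠ 0) := by simp [ha]
      have hsub : Finset.univ.filter (fun a => t a ≠ 0) ⊆ {a} := by
        intro b hb
        rcases Finset.card_le_one.mp hcard b hb a haF with h
        simp [h]
      have h1 : 1 ≤ t a := Nat.one_le_iff_ne_zero.mpr ha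
      have h2 : t a ≤ M := hle a
      refine ⟨⟨a, ⟨t a - 1, by omega⟩⟩, ?_⟩
      funext b
      by_cases hb : b = a
      · subst hb; simp; omega
      · have ht : t b = 0 := by
          by_contra hb0
          have : b ∈ Finset.univ.filter (fun a => t a ≠ 0) := by simp [hb0]
          exact hb (Finset.mem_singleton.mp (hsub this))
        simp [hb, ht]
  · rintro (rfl | ⟨⟨a, v⟩, rfl⟩)
    · exact ⟨fun a => Nat.zero_le M, by simp⟩
    · constructor
      · intro b
        by_cases hb : b = a
        · subst hb; simp
        · simp [hb]
      · have hf : (Finset.univ.filter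
            (fun b => (if b = a then v.1 + 1 else 0) ≠ 0)) = {a} := by
          ext b
          by_cases hb : b = a
          · subst hb; simp
          · simp [hb]
        simp only [hf, Finset.card_singleton, le_refl]

lemma card_simpleRel (A : Type*) [Fintype A] [DecidableEq A] (M : ℕ) :
    Nat.card (simpleRel A M) = Fintype.card A * M + 1 := by
  classical
  rw [simpleRel_eq_finset, Nat.card_coe_set_eq, Set.ncard_coe_finset]
  rw [Finset.card_insert_of_notMem, Finset.card_image_of_injective]
  · simp [Fintype.card_prod, mul_comm]
  · rintro ⟨a, v⟩ ⟨b, w⟩ h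
    have hab : a = b := by
      by_contra hne
      have := congrFun h a
      simp [hne] at this
    subst hab
    have := congrFun h a
    simp at this
    simp [Fin.ext_iff, this]
  · simp only [Finset.mem_image, not_exists]
    rintro ⟨a, v⟩ ⟨-, h⟩
    have := congrFun h a
    simp at this

theorem loomis_whitney_hard_instance_sizes
    (n M : ℕ) (hn : 3 ≤ n) (hM : 1 ≤ M) :
    (∀ i : Fin n,
      Nat.card (simpleRel {j : Fin n // j ≠ i} M) = (n - 1) * M + 1) ∧
    ({t : Fin n → ℕ | (∀ j, t j ≤ M) ∧
        ∀ i : Fin n, (fun j : {j : Fin n // j ≠ i} => t j) ∈ simpleRel {j : Fin n // j ≠ i} M}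
      = simpleRel (Fin n) M) ∧
    Nat.card (simpleRel (Fin n) M) = n * M + 1 := by
  classical
  refine ⟨fun i => ?_, ?_, ?_⟩
  · rw [card_simpleRel]
    congr 2
    rw [Fintype.card_subtype_compl]
    simp
  · ext t
    simp only [Set.mem_setOf_eq]
    constructor
    · rintro ⟨hle, hres⟩
      refine ⟨hle, ?_⟩
      by_contra hc
      push_neg at hc
      obtain ⟨j₁, hj₁, j₂, hj₂, hne⟩ := Finset.one_lt_card.mp hc
      simp only [Finset.mem_filter] at hj₁ hj₂
      -- find i distinct from j₁ and j₂
      obtain ⟨i, hi₁, hi₂⟩ : ∃ i : Fin n, i ≠ j₁ ∧ i ≠ j₂ := by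
        have hne2 : (({j₁, j₂}ᶜ : Finset (Fin n))).Nonempty := by
          apply Finset.card_pos.mp
          rw [Finset.card_compl]
          have h2 : ({j₁, j₂} : Finset (Fin n)).card ≤ 2 :=
            (Finset.card_insert_le _ _).trans (by simp)
          simp only [Fintype.card_fin]
          omega
        obtain ⟨i, hi⟩ := hne2
        simp only [Finset.mem_compl, Finset.mem_insert, Finset.mem_singleton, not_or] at hi
        exact ⟨i, hi.1, hi.2⟩
      have := (hres i).2
      have h2 : 1 < (Finset.univ.filter
          (fun j : {j : Fin n // j ≠ i} => t j ≠ 0)).card := by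
        refine Finset.one_lt_card.mpr ⟨⟨j₁, Ne.symm hi₁⟩, ?_, ⟨j₂, Ne.symm hi₂⟩, ?_, ?_⟩
        · simp [hj₁.2]
        · simp [hj₂.2]
        · simp [Subtype.ext_iff, hne]
      exact (Nat.not_lt.mpr this) h2
    · rintro ⟨hle, hcard⟩
      refine ⟨hle, fun i => ⟨fun j => hle j, ?_⟩⟩
      calc (Finset.univ.filter (fun j : {j : Fin n // j ≠ i} => t j ≠ 0)).card
          ≤ (Finset.univ.filter (fun j : Fin n => t j ≠ 0)).card := by
            apply Finset.card_le_card_of_injOn (fun j => j.1)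
            · intro j hj; simp only [Finset.mem_filter, Finset.coe_filter, Set.mem_setOf_eq] at hj ⊢; exact ⟨Finset.mem_univ _, hj.2⟩
            · intro a _ b _ h; exact Subtype.ext h
        _ ≤ 1 := hcard
  · rw [card_simpleRel]; simp
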